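/- With S''(n,k) = ⋃_{m=0}^{n-1} S''(n,k,m) (disjoint union over slices), there is a constant C_k depending only on k such that #S''(n,k) < C_k · n^k · ∑_{d|n} φ(d)/d ≤ C_k · d(n) · n^k, where d(n) is the number of divisors of n and φ is Euler's totient. Consequently #S''(n,k) = O_k(n^{k+ε}) for every ε > 0. -/

import Mathlib

open Finset

/-- The `m`-slice `S''(n,k,m)` of "bad" tuples: strictly increasing tuples
`1 ≤ a₁ < ⋯ < a_k ≤ (n-1)/2` with `a_i ≡ ±a_j (mod n/gcd(m,n))` for some `i < j`;
for `m = 0` the slice is all of `A_k(n)`. -/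
def badSlice (n k m : ℕ) : Set (Fin k → ℤ) :=
  if m = 0 then
    {a | StrictMono a ∧ ∀ i, 1 ≤ a i ∧ a i ≤ ((n : ℤ) - 1) / 2}
  else
    {a | StrictMono a ∧ (∀ i, 1 ≤ a i ∧ a i ≤ ((n : ℤ) - 1) / 2) ∧
      ∃ i j : Fin k, i < j ∧
        (a i ≡ a j [ZMOD ((n / Nat.gcd m n : ℕ) : ℤ)] ∨
         a i ≡ -a j [ZMOD ((n / Nat.gcd m n : ℕ) : ℤ)])}

/-- `#S''(n,k) = ∑_{m=0}^{n-1} #S''(n,k,m)`. -/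
noncomputable def badCount (n k : ℕ) : ℕ := ∑ m ∈ Finset.range n, Nat.card (badSlice n k m)


section Aux

lemma resCount (t M c : ℤ) (ht : 1 ≤ t) :
    ((Finset.Icc 1 M).filter (fun x => t ∣ x - c)).card ≤ ((M - 1) / t + 1).toNat := by
  have : ((M - 1) / t + 1).toNat = (Finset.Icc (0:ℤ) ((M-1)/t)).card := by
    rw [Int.card_Icc]; ring_nf
  rw [this]
  apply Finset.card_le_card_of_injOn (fun x => (x - 1) / t)
  · intro x hx
    simp only [Finset.mem_coe, Finset.mem_filter, Finset.mem_Icc] at hx ⊢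
    exact ⟨Int.ediv_nonneg (by omega) (by omega), Int.ediv_le_ediv (by omega) (by omega)⟩
  · intro x hx y hy hxy
    simp only [Finset.mem_coe, Finset.mem_filter, Finset.mem_Icc] at hx hy
    obtain ⟨q, hq⟩ : t ∣ x - y := by
      have := Int.dvd_sub hx.2 hy.2; simpa using this
    have hx1 : x - 1 = (y - 1) + t * q := by omega
    simp only at hxy
    rw [hx1, mul_comm, Int.add_mul_ediv_right _ _ (by omega : t ≠ 0)] at hxy
    have hq0 : q = 0 := by omega
    rw [hq0, mul_zero] at hq
    omega

lemma slice0 (n k : ℕ) :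
    Nat.card (badSlice n k 0) ≤ (((n:ℤ)-1)/2).toNat ^ k := by
  classical
  set M : ℤ := ((n:ℤ)-1)/2 with hM
  have hsub : badSlice n k 0 ⊆ ↑(Fintype.piFinset fun _ : Fin k => Finset.Icc 1 M) := by
    intro a ha
    simp only [badSlice, if_pos rfl, Set.mem_setOf_eq] at ha
    simp only [Finset.coe_sort_coe, Finset.mem_coe, Fintype.mem_piFinset, Finset.mem_Icc]
    exact fun i => ha.2 i
  calc Nat.card (badSlice n k 0)
      ≤ Nat.card (↑(Fintype.piFinset fun _ : Fin k => Finset.Icc 1 M) : Set (Fin k → ℤ)) :=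
        Nat.card_mono (Finset.finite_toSet _) hsub
    _ = (Fintype.piFinset fun _ : Fin k => Finset.Icc 1 M).card := Nat.card_eq_finsetCard _
    _ = M.toNat ^ k := by
        rw [Fintype.card_piFinset]
        simp [Int.card_Icc]

lemma sliceM (n k m : ℕ) (hm : m ≠ 0) (ht : 1 ≤ (n / Nat.gcd m n : ℕ)) (hk : 1 ≤ k) :
    Nat.card (badSlice n k m) ≤
      (2 * k * k) * ((((n:ℤ)-1)/2 - 1) / ((n / Nat.gcd m n : ℕ) : ℤ) + 1).toNat
        * (((n:ℤ)-1)/2).toNat ^ (k-1) := by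
  classical
  set M : ℤ := ((n:ℤ)-1)/2 with hM
  set t : ℤ := ((n / Nat.gcd m n : ℕ) : ℤ) with hts
  have ht1 : (1:ℤ) ≤ t := by rw [hts]; exact_mod_cast ht
  set F : ℕ := ((M - 1) / t + 1).toNat with hF
  set box : Finset (Fin k → ℤ) := Fintype.piFinset fun _ : Fin k => Finset.Icc 1 M with hbox
  set cover : Finset (Fin k → ℤ) := (Finset.univ : Finset (Fin k × Fin k × Bool)).biUnion
    (fun p => box.filter (fun a => p.1 ≠ p.2.1 ∧
      t ∣ a p.1 - (if p.2.2 then a p.2.1 else -a p.2.1))) with hcover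
  -- slice ⊆ cover
  have hsub : badSlice n k m ⊆ ↑cover := by
    intro a ha
    simp only [badSlice, if_neg hm, Set.mem_setOf_eq] at ha
    obtain ⟨hmono, hbd, i, j, hij, hcong⟩ := ha
    have habox : a ∈ box := by
      simp only [hbox, Fintype.mem_piFinset, Finset.mem_Icc]; exact fun l => hbd l
    have hne : i ≠ j := ne_of_lt hij
    simp only [hcover, Finset.coe_biUnion, Finset.coe_filter, Set.mem_iUnion,
      Set.mem_setOf_eq, Finset.mem_coe, Finset.mem_univ, exists_prop, true_and]
    rcases hcong with h | h
    · refine ⟨(i, j, true), habox, hne, ?_⟩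
      rw [← hts] at h
      simpa [neg_sub] using (dvd_neg.mpr h.dvd)
    · refine ⟨(i, j, false), habox, hne, ?_⟩
      rw [← hts] at h
      simpa [neg_sub, sub_neg_eq_add] using (dvd_neg.mpr h.dvd)
  -- per-part bound
  have hpart : ∀ p : Fin k × Fin k × Bool,
      (box.filter (fun a => p.1 ≠ p.2.1 ∧
        t ∣ a p.1 - (if p.2.2 then a p.2.1 else -a p.2.1))).card ≤ F * M.toNat ^ (k-1) := by
    rintro ⟨i, j, s⟩
    by_cases hij : i = j
    · simp only [hij]
      rw [Finset.filter_false_of_mem]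
      · simp
      · intro a _ h; exact h.1 rfl
    · set S := box.filter (fun a => i ≠ j ∧ t ∣ a i - (if s then a j else -a j)) with hS
      have key : S.card ≤ F * (S.image (fun a => Function.update a i 0)).card := by
        apply Finset.card_le_mul_card_image
        intro b hb
        -- fiber over b: a i determined mod t in [1,M]
        refine le_trans (Finset.card_le_card_of_injOn (fun a => a i)
          (t := (Finset.Icc 1 M).filter (fun x => t ∣ x - (if s then b j else -b j)))
          ?_ ?_) (resCount t M _ ht1)
        · intro a ha
          simp only [Finset.mem_coe, Finset.mem_filter, hS] at ha
          obtain ⟨⟨habox, -, hdvd⟩, hupd⟩ := ha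
          have hbj : b j = a j := by
            rw [← hupd, Function.update_of_ne (Ne.symm hij)]
          simp only [Finset.mem_coe, Finset.mem_filter, Finset.mem_Icc]
          refine ⟨?_, ?_⟩
          · have := (Fintype.mem_piFinset.mp habox) i
            simpa [Finset.mem_Icc] using this
          · rw [hbj]; exact hdvd
        · intro a ha a' ha' hii
          simp only [Finset.mem_coe, Finset.mem_filter] at ha ha'
          have h1 := ha.2; have h2 := ha'.2
          funext l
          by_cases hl : l = i
          · rw [hl]; exact hii
          · have := congrFun (h1.trans h2.symm) l
            simpa [Function.update_of_ne hl] using this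
      have himg : (S.image (fun a => Function.update a i 0)).card ≤ M.toNat ^ (k-1) := by
        have hsub2 : S.image (fun a => Function.update a i 0) ⊆
            Fintype.piFinset (fun l : Fin k => if l = i then {0} else Finset.Icc 1 M) := by
          intro b hb
          obtain ⟨a, ha, rfl⟩ := Finset.mem_image.mp hb
          simp only [hS, Finset.mem_filter] at ha
          have habox := ha.1
          simp only [Fintype.mem_piFinset]
          intro l
          by_cases hl : l = i
          · subst hl; simp
          · simp only [if_neg hl, Function.update_of_ne hl]
            exact (Fintype.mem_piFinset.mp habox) l
        calc (S.image (fun a => Function.update a i 0)).card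
            ≤ (Fintype.piFinset (fun l : Fin k => if l = i then ({0} : Finset ℤ)
                else Finset.Icc 1 M)).card := Finset.card_le_card hsub2
          _ = ∏ l : Fin k, (if l = i then ({0} : Finset ℤ) else Finset.Icc 1 M).card :=
              Fintype.card_piFinset _
          _ = M.toNat ^ (k-1) := by
              rw [← Finset.mul_prod_erase Finset.univ _ (Finset.mem_univ i)]
              simp only [if_pos rfl, Finset.card_singleton, one_mul]
              have : ∀ l ∈ Finset.univ.erase i,
                  (if l = i then ({0} : Finset ℤ) else Finset.Icc 1 M).card = M.toNat := by
                intro l hl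
                rw [if_neg (Finset.mem_erase.mp hl).1]
                simp [Int.card_Icc]
              rw [Finset.prod_congr rfl this, Finset.prod_const,
                Finset.card_erase_of_mem (Finset.mem_univ i), Finset.card_univ,
                Fintype.card_fin]
              simp
      calc S.card ≤ F * (S.image (fun a => Function.update a i 0)).card := key
        _ ≤ F * M.toNat ^ (k-1) := Nat.mul_le_mul_left _ himg
  calc Nat.card (badSlice n k m) ≤ Nat.card (↑cover : Set (Fin k → ℤ)) :=
        Nat.card_mono (Finset.finite_toSet _) hsub
    _ = cover.card := Nat.card_eq_finsetCard _
    _ ≤ ∑ p : Fin k × Fin k × Bool, (box.filter (fun a => p.1 ≠ p.2.1 ∧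
          t ∣ a p.1 - (if p.2.2 then a p.2.1 else -a p.2.1))).card :=
        Finset.card_biUnion_le
    _ ≤ ∑ _p : Fin k × Fin k × Bool, F * M.toNat ^ (k-1) :=
        Finset.sum_le_sum (fun p _ => hpart p)
    _ = (2 * k * k) * (F * M.toNat ^ (k-1)) := by
        rw [Finset.sum_const, Finset.card_univ, smul_eq_mul, Fintype.card_prod,
          Fintype.card_prod, Fintype.card_fin, Fintype.card_bool]
        ring
    _ = (2 * k * k) * F * M.toNat ^ (k-1) := by ring

lemma gcdSum (n : ℕ) (hn : 0 < n) :
    ∑ m ∈ Finset.range n, Nat.gcd m n ≤ ∑ g ∈ n.divisors, g * Nat.totient (n / g) := by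
  classical
  have hmap : ∀ m ∈ Finset.range n, Nat.gcd m n ∈ n.divisors := fun m _ =>
    Nat.mem_divisors.mpr ⟨Nat.gcd_dvd_right m n, hn.ne'⟩
  rw [← Finset.sum_fiberwise_of_maps_to hmap]
  apply Finset.sum_le_sum
  intro g hg
  obtain ⟨hgdvd, -⟩ := Nat.mem_divisors.mp hg
  have hinner : ∑ m ∈ (Finset.range n).filter (fun m => Nat.gcd m n = g), Nat.gcd m n
      = g * ((Finset.range n).filter (fun m => Nat.gcd m n = g)).card := by
    rw [Finset.sum_congr rfl (fun m hm => (Finset.mem_filter.mp hm).2),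
      Finset.sum_const, smul_eq_mul, mul_comm]
  rw [hinner]
  apply Nat.mul_le_mul_left
  rw [Nat.totient_eq_card_coprime]
  apply Finset.card_le_card_of_injOn (fun m => m / g)
  · intro m hm
    obtain ⟨hmr, hmg⟩ := Finset.mem_filter.mp hm
    have hmlt := Finset.mem_range.mp hmr
    have hg0 : 0 < g := by
      rcases Nat.eq_zero_or_pos g with h | h
      · exfalso; rw [h] at hgdvd; omega
      · exact h
    have hgm : g ∣ m := hmg ▸ Nat.gcd_dvd_left m n
    refine Finset.mem_filter.mpr ⟨Finset.mem_range.mpr ?_, ?_⟩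
    · exact Nat.div_lt_div_of_lt_of_dvd hgdvd hmlt
    · have := Nat.coprime_div_gcd_div_gcd (m := m) (n := n) (hmg ▸ hg0)
      rw [hmg] at this
      exact this.symm
  · intro m hm m' hm' hmm
    obtain ⟨-, hmg⟩ := Finset.mem_filter.mp hm
    obtain ⟨-, hmg'⟩ := Finset.mem_filter.mp hm'
    have hg0 : 0 < g := by
      rcases Nat.eq_zero_or_pos g with h | h
      · exfalso; rw [h] at hgdvd; omega
      · exact h
    have hgm : g ∣ m := hmg ▸ Nat.gcd_dvd_left m n
    have hgm' : g ∣ m' := hmg' ▸ Nat.gcd_dvd_left m' n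
    have : m / g * g = m' / g * g := congrArg (· * g) hmm
    rwa [Nat.div_mul_cancel hgm, Nat.div_mul_cancel hgm'] at this

lemma divSumReal (n : ℕ) (hn : 0 < n) :
    ((∑ g ∈ n.divisors, g * Nat.totient (n / g) : ℕ) : ℝ)
      = n * ∑ d ∈ n.divisors, (Nat.totient d : ℝ) / d := by
  have h1 : ((∑ g ∈ n.divisors, g * Nat.totient (n / g) : ℕ) : ℝ)
      = ∑ g ∈ n.divisors, (fun x => ((n / x : ℕ) : ℝ) * (Nat.totient x : ℝ)) (n / g) := by
    push_cast
    refine Finset.sum_congr rfl (fun g hg => ?_)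
    obtain ⟨hgdvd, hn0⟩ := Nat.mem_divisors.mp hg
    rw [Nat.div_div_self hgdvd hn0]
  rw [h1, Nat.sum_div_divisors n (fun x => ((n / x : ℕ) : ℝ) * (Nat.totient x : ℝ)),
    Finset.mul_sum]
  refine Finset.sum_congr rfl (fun d hd => ?_)
  obtain ⟨hddvd, hn0⟩ := Nat.mem_divisors.mp hd
  have hd0 : d ≠ 0 := fun h => hn0 (by simpa [h] using hddvd)
  rw [Nat.cast_div hddvd (by exact_mod_cast hd0)]
  field_simp

lemma primeFactorBound {ε : ℝ} (hε : 0 < ε) (p a : ℕ) (hp : 2 ≤ p) :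
    ((a : ℝ) + 1) ≤ (if (p:ℝ) < (2:ℝ) ^ (1/ε) then (1 + 1/(ε * Real.log 2)) else 1)
      * ((p:ℝ) ^ a) ^ ε := by
  have hlog2 : 0 < Real.log 2 := Real.log_pos (by norm_num)
  have hc : 0 < ε * Real.log 2 := mul_pos hε hlog2
  have hp0 : (0:ℝ) < p := by positivity
  have hpow : ((p:ℝ) ^ a) ^ ε = (p:ℝ) ^ ((a:ℝ) * ε) := by
    rw [← Real.rpow_natCast (p:ℝ) a, ← Real.rpow_mul hp0.le]
  rw [hpow]
  have haε : 0 ≤ (a:ℝ) * ε := by positivity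
  split_ifs with hsmall
  · -- small prime: p^{aε} ≥ 2^{aε} = exp(aε log 2) ≥ 1 + aε log 2
    have h2 : (2:ℝ) ^ ((a:ℝ) * ε) ≤ (p:ℝ) ^ ((a:ℝ) * ε) :=
      Real.rpow_le_rpow (by norm_num) (by exact_mod_cast hp) haε
    have h3 : 1 + (a:ℝ) * (ε * Real.log 2) ≤ (2:ℝ) ^ ((a:ℝ) * ε) := by
      rw [Real.rpow_def_of_pos (by norm_num : (0:ℝ) < 2)]
      have := Real.add_one_le_exp ((a:ℝ) * ε * Real.log 2)
      calc 1 + (a:ℝ) * (ε * Real.log 2) = (a:ℝ) * ε * Real.log 2 + 1 := by ring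
        _ ≤ Real.exp ((a:ℝ) * ε * Real.log 2) := this
        _ = Real.exp (Real.log 2 * ((a:ℝ) * ε)) := by ring_nf
    have h4 : ((a:ℝ) + 1) ≤ (1 + 1/(ε * Real.log 2)) * (1 + (a:ℝ) * (ε * Real.log 2)) := by
      set c := ε * Real.log 2
      have ha0 : (0:ℝ) ≤ a := by positivity
      have expand : (1 + 1/c) * (1 + (a:ℝ) * c) = 1 + (a:ℝ)*c + 1/c + (a:ℝ) * (c * (1/c)) := by
        ring
      rw [expand, mul_one_div_cancel hc.ne', mul_one]
      have : 0 ≤ (a:ℝ)*c := by positivity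
      have : 0 ≤ 1/c := by positivity
      linarith
    calc ((a:ℝ) + 1) ≤ (1 + 1/(ε * Real.log 2)) * (1 + (a:ℝ) * (ε * Real.log 2)) := h4
      _ ≤ (1 + 1/(ε * Real.log 2)) * ((p:ℝ) ^ ((a:ℝ) * ε)) := by
          apply mul_le_mul_of_nonneg_left (h3.trans h2)
          positivity
  · -- large prime: p^{aε} ≥ (2^{1/ε})^{aε} = 2^a ≥ a+1
    push_neg at hsmall
    have h2 : ((2:ℝ) ^ (1/ε)) ^ ((a:ℝ) * ε) ≤ (p:ℝ) ^ ((a:ℝ) * ε) :=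
      Real.rpow_le_rpow (by positivity) hsmall haε
    have h3 : ((2:ℝ) ^ (1/ε)) ^ ((a:ℝ) * ε) = (2:ℝ) ^ (a:ℝ) := by
      rw [← Real.rpow_mul (by norm_num : (0:ℝ) ≤ 2)]
      congr 1
      field_simp
    have h4 : ((a:ℝ) + 1) ≤ (2:ℝ) ^ (a:ℝ) := by
      rw [Real.rpow_natCast]
      have := @Nat.lt_two_pow_self a
      exact_mod_cast Nat.succ_le_of_lt this
    rw [one_mul]
    exact h4.trans (h3 ▸ h2)

lemma divisorBound {ε : ℝ} (hε : 0 < ε) :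
    ∃ C : ℝ, 0 < C ∧ ∀ n : ℕ, 0 < n → (n.divisors.card : ℝ) ≤ C * (n:ℝ) ^ ε := by
  classical
  have hlog2 : 0 < Real.log 2 := Real.log_pos (by norm_num)
  set B : ℝ := 1 + 1/(ε * Real.log 2) with hB
  have hB1 : 1 ≤ B := by
    have h : 0 ≤ 1/(ε * Real.log 2) := by positivity
    rw [hB]; linarith
  set N : ℕ := ⌈(2:ℝ) ^ (1/ε)⌉₊ with hN
  refine ⟨B ^ (N+1), by positivity, ?_⟩
  intro n hn
  have hne : n ≠ 0 := hn.ne'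
  -- decompose
  have hcard : (n.divisors.card : ℝ) = ∏ p ∈ n.primeFactors, ((n.factorization p : ℝ) + 1) := by
    rw [Nat.card_divisors hne]
    push_cast
    rfl
  have hnprod : (n:ℝ) = ∏ p ∈ n.primeFactors, (p:ℝ) ^ (n.factorization p) := by
    conv_lhs => rw [← Nat.factorization_prod_pow_eq_self hne]
    rw [Nat.prod_factorization_eq_prod_primeFactors]
    push_cast
    rfl
  have hrpow : (n:ℝ) ^ ε = ∏ p ∈ n.primeFactors, ((p:ℝ) ^ (n.factorization p)) ^ ε := by
    rw [hnprod, ← Real.finset_prod_rpow _ _ (fun p _ => by positivity) ε]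
  rw [hcard, hrpow]
  -- pointwise bound with weights
  set w : ℕ → ℝ := fun p => if (p:ℝ) < (2:ℝ) ^ (1/ε) then B else 1 with hw
  have hpoint : ∀ p ∈ n.primeFactors, ((n.factorization p : ℝ) + 1)
      ≤ w p * ((p:ℝ) ^ (n.factorization p)) ^ ε := by
    intro p hp
    exact primeFactorBound hε p _ (Nat.Prime.two_le (Nat.prime_of_mem_primeFactors hp))
  calc ∏ p ∈ n.primeFactors, ((n.factorization p : ℝ) + 1)
      ≤ ∏ p ∈ n.primeFactors, w p * ((p:ℝ) ^ (n.factorization p)) ^ ε := by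
        apply Finset.prod_le_prod (fun p _ => by positivity) hpoint
    _ = (∏ p ∈ n.primeFactors, w p) * ∏ p ∈ n.primeFactors, ((p:ℝ) ^ (n.factorization p)) ^ ε :=
        Finset.prod_mul_distrib
    _ ≤ B ^ (N+1) * ∏ p ∈ n.primeFactors, ((p:ℝ) ^ (n.factorization p)) ^ ε := by
        apply mul_le_mul_of_nonneg_right _ (by positivity)
        have hwprod : ∏ p ∈ n.primeFactors, w p
            = B ^ (n.primeFactors.filter (fun p : ℕ => (p:ℝ) < (2:ℝ) ^ (1/ε))).card := by
          rw [hw, ← Finset.prod_filter, Finset.prod_const]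
        rw [hwprod]
        apply pow_le_pow_right₀ hB1
        have hsub : n.primeFactors.filter (fun p : ℕ => (p:ℝ) < (2:ℝ) ^ (1/ε))
            ⊆ Finset.range (N+1) := by
          intro p hp
          obtain ⟨-, hlt⟩ := Finset.mem_filter.mp hp
          rw [Finset.mem_range]
          have h1 : (p:ℝ) ≤ (N:ℝ) := hlt.le.trans (Nat.le_ceil _)
          have h2 : p ≤ N := by exact_mod_cast h1
          omega
        calc _ ≤ (Finset.range (N+1)).card := Finset.card_le_card hsub
          _ = N + 1 := Finset.card_range _

end Aux

/-- There is a constant `C_k > 0` depending only on `k` such that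
`#S''(n,k) < C_k · n^k · ∑_{d∣n} φ(d)/d ≤ C_k · d(n) · n^k`; consequently
`#S''(n,k) = O_k(n^{k+ε})` for every `ε > 0`. -/
theorem badCount_bound (k : ℕ) (hk : 1 ≤ k) :
    (∃ C : ℝ, 0 < C ∧ ∀ n : ℕ, Odd n → 1 < n →
      (badCount n k : ℝ) < C * (n : ℝ) ^ k *
          (∑ d ∈ n.divisors, (Nat.totient d : ℝ) / (d : ℝ)) ∧
      C * (n : ℝ) ^ k * (∑ d ∈ n.divisors, (Nat.totient d : ℝ) / (d : ℝ)) ≤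
        C * (n.divisors.card : ℝ) * (n : ℝ) ^ k) ∧
    ∀ ε : ℝ, 0 < ε → ∃ C : ℝ, 0 < C ∧ ∀ n : ℕ, Odd n → 1 < n →
      (badCount n k : ℝ) ≤ C * (n : ℝ) ^ ((k : ℝ) + ε) := by
  classical
  set Ck : ℝ := 4 * k * k + 2 with hCk
  have hCk0 : (0:ℝ) < Ck := by rw [hCk]; positivity
  -- main counting estimate
  have hmain : ∀ n : ℕ, 1 < n →
      (badCount n k : ℝ) ≤ (4 * k * k + 1) * (n:ℝ) ^ k *
        (∑ d ∈ n.divisors, (Nat.totient d : ℝ) / (d : ℝ)) := by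
    intro n hn1
    have hn0 : 0 < n := by omega
    set M : ℤ := ((n:ℤ) - 1) / 2 with hM
    have hMn : M.toNat ≤ n := by
      have h1 : M ≤ (n:ℤ) := by
        rw [hM]; omega
      omega
    -- pointwise slice bounds
    have hslice : ∀ m ∈ (Finset.range n).erase 0,
        Nat.card (badSlice n k m) ≤ 2 * k * k * (2 * Nat.gcd m n) * n ^ (k-1) := by
      intro m hm
      obtain ⟨hm0, hmr⟩ := Finset.mem_erase.mp hm
      have hgpos : 0 < Nat.gcd m n := Nat.gcd_pos_of_pos_right m hn0
      have hgdvd : Nat.gcd m n ∣ n := Nat.gcd_dvd_right m n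
      have ht : 1 ≤ n / Nat.gcd m n :=
        (Nat.one_le_div_iff hgpos).mpr (Nat.le_of_dvd hn0 hgdvd)
      have hF : ((M - 1) / ((n / Nat.gcd m n : ℕ) : ℤ) + 1).toNat ≤ 2 * Nat.gcd m n := by
        set t : ℤ := ((n / Nat.gcd m n : ℕ) : ℤ) with hts
        have ht1 : (1:ℤ) ≤ t := by rw [hts]; exact_mod_cast ht
        have hnt : (n:ℤ) = t * (Nat.gcd m n : ℤ) := by
          rw [hts]
          exact_mod_cast (Nat.div_mul_cancel hgdvd).symm
        have h1 : (M - 1) / t ≤ (n:ℤ) / t := by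
          apply Int.ediv_le_ediv (by omega)
          rw [hM]; omega
        have h2 : (n:ℤ) / t = (Nat.gcd m n : ℤ) := by
          rw [hnt, Int.mul_ediv_cancel_left _ (by omega : t ≠ 0)]
        have h3 : (M - 1) / t + 1 ≤ (2 * Nat.gcd m n : ℕ) := by
          push_cast
          omega
        exact Int.toNat_le.mpr h3
      calc Nat.card (badSlice n k m)
          ≤ (2 * k * k) * ((M - 1) / ((n / Nat.gcd m n : ℕ) : ℤ) + 1).toNat
              * M.toNat ^ (k-1) := sliceM n k m hm0 ht hk
        _ ≤ (2 * k * k) * (2 * Nat.gcd m n) * n ^ (k-1) := by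
            apply Nat.mul_le_mul
            · exact Nat.mul_le_mul_left _ hF
            · exact Nat.pow_le_pow_left hMn _
    -- sum up
    have hnat : badCount n k ≤ n ^ k + (2 * k * k) * (2 * n ^ (k-1))
        * ∑ g ∈ n.divisors, g * Nat.totient (n / g) := by
      rw [badCount, ← Finset.add_sum_erase _ _ (Finset.mem_range.mpr hn0)]
      have h0 : Nat.card (badSlice n k 0) ≤ n ^ k :=
        (slice0 n k).trans (Nat.pow_le_pow_left hMn k)
      have hrest : ∑ m ∈ (Finset.range n).erase 0, Nat.card (badSlice n k m)
          ≤ (2 * k * k) * (2 * n ^ (k-1)) * ∑ g ∈ n.divisors, g * Nat.totient (n / g) := by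
        calc ∑ m ∈ (Finset.range n).erase 0, Nat.card (badSlice n k m)
            ≤ ∑ m ∈ (Finset.range n).erase 0, 2 * k * k * (2 * Nat.gcd m n) * n ^ (k-1) :=
              Finset.sum_le_sum hslice
          _ = (2 * k * k) * (2 * n ^ (k-1)) * ∑ m ∈ (Finset.range n).erase 0, Nat.gcd m n := by
              rw [Finset.mul_sum]
              exact Finset.sum_congr rfl (fun m _ => by ring)
          _ ≤ (2 * k * k) * (2 * n ^ (k-1)) * ∑ m ∈ Finset.range n, Nat.gcd m n := by
              apply Nat.mul_le_mul_left
              exact Finset.sum_le_sum_of_subset (Finset.erase_subset _ _)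
          _ ≤ (2 * k * k) * (2 * n ^ (k-1)) * ∑ g ∈ n.divisors, g * Nat.totient (n / g) :=
              Nat.mul_le_mul_left _ (gcdSum n hn0)
      omega
    -- to the reals
    set S : ℝ := ∑ d ∈ n.divisors, (Nat.totient d : ℝ) / (d : ℝ) with hS
    have hS1 : 1 ≤ S := by
      rw [hS]
      have h1 : ((Nat.totient 1 : ℝ) / (1:ℕ)) = 1 := by norm_num
      calc (1:ℝ) = (Nat.totient 1 : ℝ) / ((1:ℕ):ℝ) := by norm_num
        _ ≤ S := Finset.single_le_sum (f := fun d => (Nat.totient d : ℝ) / (d : ℝ))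
            (fun d _ => by positivity) (Nat.one_mem_divisors.mpr hn0.ne')
    have hGS : ((∑ g ∈ n.divisors, g * Nat.totient (n / g) : ℕ) : ℝ) = n * S :=
      divSumReal n hn0
    have hcast : (badCount n k : ℝ) ≤ (n:ℝ) ^ k + (2 * k * k) * (2 * (n:ℝ) ^ (k-1))
        * ((n:ℝ) * S) := by
      rw [← hGS]
      exact_mod_cast hnat
    have hpow : (n:ℝ) ^ (k-1) * (n:ℝ) = (n:ℝ) ^ k := by
      rw [← pow_succ]
      congr 1
      omega
    have hnk0 : (0:ℝ) < (n:ℝ) ^ k := by positivity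
    calc (badCount n k : ℝ)
        ≤ (n:ℝ) ^ k + (2 * k * k) * (2 * (n:ℝ) ^ (k-1)) * ((n:ℝ) * S) := hcast
      _ = (n:ℝ) ^ k + (4 * k * k) * ((n:ℝ) ^ (k-1) * (n:ℝ)) * S := by ring
      _ = (n:ℝ) ^ k + (4 * k * k) * (n:ℝ) ^ k * S := by rw [hpow]
      _ ≤ (n:ℝ) ^ k * S + (4 * k * k) * (n:ℝ) ^ k * S := by
          have : (n:ℝ) ^ k ≤ (n:ℝ) ^ k * S := le_mul_of_one_le_right hnk0.le hS1
          linarith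
      _ = (4 * k * k + 1) * (n:ℝ) ^ k * S := by ring
  -- helper: S ≥ 1 and S ≤ d(n)
  have hS1 : ∀ n : ℕ, 0 < n → 1 ≤ ∑ d ∈ n.divisors, (Nat.totient d : ℝ) / (d : ℝ) := by
    intro n hn0
    calc (1:ℝ) = (Nat.totient 1 : ℝ) / ((1:ℕ):ℝ) := by norm_num
      _ ≤ _ := Finset.single_le_sum (f := fun d => (Nat.totient d : ℝ) / (d : ℝ))
          (fun d _ => by positivity) (Nat.one_mem_divisors.mpr hn0.ne')
  have hScard : ∀ n : ℕ, (∑ d ∈ n.divisors, (Nat.totient d : ℝ) / (d : ℝ))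
      ≤ (n.divisors.card : ℝ) := by
    intro n
    calc ∑ d ∈ n.divisors, (Nat.totient d : ℝ) / (d : ℝ)
        ≤ ∑ _d ∈ n.divisors, (1:ℝ) := by
          apply Finset.sum_le_sum
          intro d hd
          have hd0 : 0 < d := Nat.pos_of_mem_divisors hd
          rw [div_le_one (by exact_mod_cast hd0)]
          exact_mod_cast Nat.totient_le d
      _ = (n.divisors.card : ℝ) := by simp
  have part1 : ∀ n : ℕ, Odd n → 1 < n →
      (badCount n k : ℝ) < Ck * (n : ℝ) ^ k *
          (∑ d ∈ n.divisors, (Nat.totient d : ℝ) / (d : ℝ)) ∧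
      Ck * (n : ℝ) ^ k * (∑ d ∈ n.divisors, (Nat.totient d : ℝ) / (d : ℝ)) ≤
        Ck * (n.divisors.card : ℝ) * (n : ℝ) ^ k := by
    intro n _ hn1
    have hn0 : 0 < n := by omega
    have hnk0 : (0:ℝ) < (n:ℝ) ^ k := by positivity
    have hSpos := hS1 n hn0
    constructor
    · calc (badCount n k : ℝ)
          ≤ (4 * k * k + 1) * (n:ℝ) ^ k * (∑ d ∈ n.divisors, (Nat.totient d : ℝ) / (d : ℝ)) :=
            hmain n hn1
        _ < Ck * (n:ℝ) ^ k * (∑ d ∈ n.divisors, (Nat.totient d : ℝ) / (d : ℝ)) := by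
            apply mul_lt_mul_of_pos_right _ (by linarith)
            apply mul_lt_mul_of_pos_right _ hnk0
            rw [hCk]; linarith
    · calc Ck * (n:ℝ) ^ k * (∑ d ∈ n.divisors, (Nat.totient d : ℝ) / (d : ℝ))
          ≤ Ck * (n:ℝ) ^ k * (n.divisors.card : ℝ) :=
            mul_le_mul_of_nonneg_left (hScard n) (by positivity)
        _ = Ck * (n.divisors.card : ℝ) * (n:ℝ) ^ k := by ring
  refine ⟨⟨Ck, hCk0, part1⟩, ?_⟩
  -- part 2
  intro ε hε
  obtain ⟨Cε, hCε0, hCε⟩ := divisorBound hε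
  refine ⟨Ck * Cε, by positivity, ?_⟩
  intro n hodd hn1
  have hn0 : 0 < n := by omega
  obtain ⟨hlt, hle⟩ := part1 n hodd hn1
  have hrpow : (n:ℝ) ^ ((k:ℝ) + ε) = (n:ℝ) ^ k * (n:ℝ) ^ ε := by
    rw [Real.rpow_add (by exact_mod_cast hn0), Real.rpow_natCast]
  calc (badCount n k : ℝ)
      ≤ Ck * (n.divisors.card : ℝ) * (n:ℝ) ^ k := (hlt.trans_le hle).le
    _ ≤ Ck * (Cε * (n:ℝ) ^ ε) * (n:ℝ) ^ k := by
        apply mul_le_mul_of_nonneg_right _ (by positivity)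
        exact mul_le_mul_of_nonneg_left (hCε n hn0) hCk0.le
    _ = Ck * Cε * (n:ℝ) ^ ((k:ℝ) + ε) := by rw [hrpow]; ring
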